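/- Let t be an SL₂-tiling with no entry equal to 1, i.e. t(i,j) ≥ 2 for all i, j. Then t has a unique minimal entry: there exists exactly one pair of integers (b,v) such that t(b,v) ≤ t(i,j) for all integers i, j; equivalently, there exists a pair (b,v) with t(b,v) < t(i,j) for all (i,j) ≠ (b,v). -/

import Mathlib

/-- An `SL₂`-tiling: all entries are `≥ 1` and every adjacent `2×2` minor is `1`. -/
def IsSL2Tiling (t : ℤ → ℤ → ℤ) : Prop :=
  (∀ i j, 1 ≤ t i j) ∧
  (∀ i j, t i j * t (i+1) (j+1) - t i (j+1) * t (i+1) j = 1)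

namespace SL2Aux

variable {t : ℤ → ℤ → ℤ}

/-- Rule 1: in a 2×2 block, if the top row is (weakly) increasing, the bottom is strictly. -/
lemma R1 (ht : IsSL2Tiling t) (h2 : ∀ i j, 2 ≤ t i j) {i j : ℤ}
    (h : t i j ≤ t i (j+1)) : t (i+1) j < t (i+1) (j+1) := by
  by_contra hc
  push_neg at hc
  have hd := ht.2 i j
  nlinarith [h2 i j, h2 i (j+1), h2 (i+1) j, h2 (i+1) (j+1),
    mul_le_mul h hc (by linarith [h2 (i+1) (j+1)]) (by linarith [h2 i (j+1)])]

/-- Rule 2: if the top row is strictly decreasing, the bottom is strictly decreasing. -/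
lemma R2 (ht : IsSL2Tiling t) (h2 : ∀ i j, 2 ≤ t i j) {i j : ℤ}
    (h : t i (j+1) < t i j) : t (i+1) (j+1) < t (i+1) j := by
  by_contra hc
  push_neg at hc
  have hd := ht.2 i j
  nlinarith [h2 i j, h2 i (j+1), h2 (i+1) j, h2 (i+1) (j+1),
    mul_le_mul_of_nonneg_right (show t i (j+1) ≤ t i j - 1 by linarith)
      (show (0:ℤ) ≤ t (i+1) j by linarith [h2 (i+1) j]),
    mul_le_mul_of_nonneg_left hc (show (0:ℤ) ≤ t i j by linarith [h2 i j])]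

/-- No two horizontally adjacent entries are equal. -/
lemma no_horiz_eq (ht : IsSL2Tiling t) (h2 : ∀ i j, 2 ≤ t i j) (i j : ℤ) :
    t i j ≠ t i (j+1) := by
  intro h
  have e : i - 1 + 1 = i := by ring
  rcases le_or_gt (t (i-1) j) (t (i-1) (j+1)) with h'|h'
  · have := R1 ht h2 h'
    rw [e] at this; omega
  · have := R2 ht h2 h'
    rw [e] at this; omega

/-- Going up: strict increase propagates upwards. -/
lemma up (ht : IsSL2Tiling t) (h2 : ∀ i j, 2 ≤ t i j) {i j : ℤ}
    (h : t (i+1) j < t (i+1) (j+1)) : t i j < t i (j+1) := by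
  rcases lt_trichotomy (t i j) (t i (j+1)) with h'|h'|h'
  · exact h'
  · exact absurd h' (no_horiz_eq ht h2 i j)
  · have := R2 ht h2 h'; omega

/-- Each adjacent pair of columns is uniformly strictly ordered. -/
lemma colSign (ht : IsSL2Tiling t) (h2 : ∀ i j, 2 ≤ t i j) (j : ℤ) :
    (∀ i, t i j < t i (j+1)) ∨ (∀ i, t i (j+1) < t i j) := by
  rcases lt_or_gt_of_ne (no_horiz_eq ht h2 0 j) with h | h
  · left
    intro i
    induction i using Int.induction_on with
    | zero => exact h
    | succ k ih => exact R1 ht h2 (le_of_lt ih)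
    | pred k ih =>
      have e : (-(k:ℤ) - 1) + 1 = -(k:ℤ) := by ring
      apply up ht h2 (i := -(k:ℤ) - 1) (j := j)
      rwa [e]
  · right
    intro i
    induction i using Int.induction_on with
    | zero => exact h
    | succ k ih => exact R2 ht h2 ih
    | pred k ih =>
      by_contra hc
      push_neg at hc
      rcases lt_or_eq_of_le hc with h'|h'
      · have := R1 ht h2 (le_of_lt h')
        have e : (-(k:ℤ) - 1) + 1 = -(k:ℤ) := by ring
        rw [e] at this; omega
      · exact no_horiz_eq ht h2 _ j h'

/-- Local max column is the sum of its neighbours. -/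
lemma localMax_sum (ht : IsSL2Tiling t) (h2 : ∀ i j, 2 ≤ t i j) {c : ℤ}
    (hl : ∀ i, t i (c-1) < t i c) (hr : ∀ i, t i (c+1) < t i c) :
    ∀ i, t i c = t i (c-1) + t i (c+1) := by
  have ec : c - 1 + 1 = c := by ring
  have hdet1 : ∀ i, t i (c-1) * t (i+1) c - t i c * t (i+1) (c-1) = 1 := by
    intro i; have := ht.2 i (c-1); rwa [ec] at this
  have hdet2 : ∀ i, t i c * t (i+1) (c+1) - t i (c+1) * t (i+1) c = 1 := fun i => ht.2 i c
  -- identity: ratio (x+z)/y is constant down the column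
  have I : ∀ i, t (i+1) c * (t i (c-1) + t i (c+1)) = t i c * (t (i+1) (c-1) + t (i+1) (c+1)) := by
    intro i
    linear_combination (hdet1 i) - (hdet2 i)
  have ypos : ∀ i, 0 < t i c := fun i => by have := h2 i c; omega
  -- gcd argument at rows 0 and 1 shows s 0 = y 0
  have key : t 0 (c-1) + t 0 (c+1) = t 0 c := by
    set g : ℤ := (Int.gcd (t 0 c) (t 0 (c-1) + t 0 (c+1)) : ℤ) with hg
    have hgpos : 0 < Int.gcd (t 0 c) (t 0 (c-1) + t 0 (c+1)) := by
      rw [Int.gcd_pos_iff]; left; exact ne_of_gt (ypos 0)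
    have hgy : g ∣ t 0 c := Int.gcd_dvd_left _ _
    have hgs : g ∣ t 0 (c-1) + t 0 (c+1) := Int.gcd_dvd_right _ _
    set q : ℤ := t 0 c / g with hq
    set p : ℤ := (t 0 (c-1) + t 0 (c+1)) / g with hp
    have hyq : t 0 c = g * q := (Int.mul_ediv_cancel' hgy).symm
    have hsp : t 0 (c-1) + t 0 (c+1) = g * p := (Int.mul_ediv_cancel' hgs).symm
    have hcop : Int.gcd q p = 1 := Int.gcd_div_gcd_div_gcd hgpos
    have hgne : g ≠ 0 := by positivity
    -- q divides t 1 c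
    have hqy1 : q ∣ t 1 c := by
      have hI0 := I 0
      rw [zero_add] at hI0
      have hgg : g * (t 1 c * p) = g * (q * (t 1 (c-1) + t 1 (c+1))) := by
        linear_combination hI0 - (t 1 c) * hsp + (t 1 (c-1) + t 1 (c+1)) * hyq
      have h' : t 1 c * p = q * (t 1 (c-1) + t 1 (c+1)) := mul_left_cancel₀ hgne hgg
      exact Int.dvd_of_dvd_mul_left_of_gcd_one ⟨t 1 (c-1) + t 1 (c+1), h'⟩ hcop
    have hqy0 : q ∣ t 0 c := ⟨g, by linarith [hyq]⟩
    have hq1 : q ∣ 1 := by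
      have hd := hdet1 0
      rw [zero_add] at hd
      have : q ∣ t 0 (c-1) * t 1 c - t 0 c * t 1 (c-1) :=
        dvd_sub (Dvd.dvd.mul_left hqy1 _) (Dvd.dvd.mul_right hqy0 _)
      rwa [hd] at this
    have hqpos : 0 < q := by
      rcases lt_trichotomy q 0 with h'|h'|h'
      · nlinarith [ypos 0, hgpos]
      · rw [h'] at hyq; simp at hyq; exact absurd hyq (ne_of_gt (ypos 0))
      · exact h'
    have hqone : q = 1 := by
      rcases Int.isUnit_iff.mp (isUnit_of_dvd_one hq1) with h'|h' <;> omega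
    -- so t 0 c = g, and s 0 = t 0 c * p with 0 < s0 < 2 * t 0 c
    have hy0g : t 0 c = g := by rw [hyq, hqone, mul_one]
    have hs0 : t 0 (c-1) + t 0 (c+1) = t 0 c * p := by rw [hsp, hy0g]
    have hspos : 0 < t 0 (c-1) + t 0 (c+1) := by
      have := h2 0 (c-1); have := h2 0 (c+1); omega
    have hslt : t 0 (c-1) + t 0 (c+1) < 2 * t 0 c := by
      have h1 := hl 0; have h2' := hr 0; omega
    have hp1 : p = 1 := by nlinarith [ypos 0]
    rw [hs0, hp1, mul_one]
  -- constancy of the ratio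
  have K : ∀ i, (t i (c-1) + t i (c+1)) * t 0 c = t i c * (t 0 (c-1) + t 0 (c+1)) := by
    intro i
    induction i using Int.induction_on with
    | zero => ring
    | succ k ih =>
      have hI := I k
      apply mul_left_cancel₀ (ne_of_gt (ypos k))
      linear_combination -(t 0 c) * hI + (t ((k:ℤ)+1) c) * ih
    | pred k ih =>
      have hI := I (-(k:ℤ) - 1)
      rw [show (-(k:ℤ) - 1) + 1 = -(k:ℤ) by ring] at hI
      apply mul_left_cancel₀ (ne_of_gt (ypos (-(k:ℤ))))
      linear_combination (t 0 c) * hI + (t (-(k:ℤ)-1) c) * ih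
  intro i
  have hK := K i
  rw [key] at hK
  have := mul_right_cancel₀ (ne_of_gt (ypos 0)) hK
  omega

/-- Find a sign flip of a predicate between a and b. -/
lemma exists_flip (P : ℤ → Prop) : ∀ (n : ℕ) (a b : ℤ), b - a ≤ (n:ℤ) → a < b → P a → ¬ P b →
    ∃ j, a ≤ j ∧ j < b ∧ P j ∧ ¬ P (j+1) := by
  intro n
  induction n with
  | zero => intro a b h1 h2 _ _; omega
  | succ k ih =>
    intro a b h1 h2 hPa hPb
    by_cases hP : P (a+1)
    · by_cases hab : a + 1 < b
      · obtain ⟨j, hj1, hj2, hj3, hj4⟩ := ih (a+1) b (by omega) hab hP hPb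
        exact ⟨j, by omega, hj2, hj3, hj4⟩
      · have : a + 1 = b := by omega
        rw [this] at hP
        exact absurd hP hPb
    · exact ⟨a, le_rfl, h2, hPa, hP⟩

/-- Core descent: two global minima cannot lie in columns v < v'. -/
lemma cols' : ∀ (n : ℕ) (t : ℤ → ℤ → ℤ), IsSL2Tiling t → (∀ i j, 2 ≤ t i j) →
    ∀ b v b' v', (∀ i j, t b v ≤ t i j) → t b' v' = t b v → v < v' → v' - v ≤ (n:ℤ) → False := by
  intro n
  induction n with
  | zero => intro t ht h2 b v b' v' hmin heq hlt hle; omega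
  | succ k ih =>
    intro t ht h2 b v b' v' hmin heq hlt hle
    have hPv : ∀ i, t i v < t i (v+1) := by
      rcases colSign ht h2 v with h | h
      · exact h
      · have := h b; have := hmin b (v+1); omega
    by_cases hv1 : v' = v + 1
    · have h1 := hPv b'
      rw [← hv1] at h1
      have h2' := hmin b' v
      omega
    · -- v' ≥ v + 2
      have hNv' : ¬ (∀ i, t i (v'-1) < t i (v'-1+1)) := by
        intro h
        have h1 := h b'
        rw [show v' - 1 + 1 = v' by ring] at h1
        have h2' := hmin b' (v'-1)
        omega
      obtain ⟨j, hj1, hj2, hPj, hPj1⟩ := exists_flip (fun j => ∀ i, t i j < t i (j+1))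
        k v (v'-1) (by omega) (by omega) hPv hNv'
      have hNeg : ∀ i, t i (j+1+1) < t i (j+1) := by
        rcases colSign ht h2 (j+1) with h|h
        · exact absurd h hPj1
        · exact h
      set c : ℤ := j + 1 with hc
      have hl : ∀ i, t i (c-1) < t i c := by
        intro i; have := hPj i
        rw [show c - 1 = j by omega, show c = j + 1 by omega]
        exact this
      have hr : ∀ i, t i (c+1) < t i c := fun i => hNeg i
      have hsum := localMax_sum ht h2 hl hr
      -- delete column c
      set t₁ : ℤ → ℤ → ℤ := fun i jj => t i (if jj < c then jj else jj + 1) with ht₁def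
      have ht₁ : IsSL2Tiling t₁ := by
        constructor
        · intro i jj; exact ht.1 i _
        · intro i jj
          simp only [ht₁def]
          by_cases hA : jj + 1 < c
          · rw [if_pos (by omega : jj < c), if_pos hA]
            exact ht.2 i jj
          · by_cases hB : jj < c
            · have hjj : jj = c - 1 := by omega
              rw [if_pos hB, if_neg (by omega : ¬ jj + 1 < c)]
              rw [hjj]
              have hd := ht.2 i (c-1)
              rw [show c - 1 + 1 = c by ring] at hd
              have e1 := hsum i
              have e2 := hsum (i+1)
              rw [show c - 1 + 1 + 1 = c + 1 by ring]
              linear_combination hd - t i (c-1) * e2 + t (i+1) (c-1) * e1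
            · rw [if_neg hB, if_neg (by omega : ¬ jj + 1 < c)]
              exact ht.2 i (jj+1)
      have h2₁ : ∀ i jj, 2 ≤ t₁ i jj := fun i jj => h2 i _
      have hvc : v < c := by omega
      have hmin₁ : ∀ i jj, t₁ b v ≤ t₁ i jj := by
        intro i jj
        simp only [ht₁def]
        rw [if_pos hvc]
        exact hmin i _
      have heq₁ : t₁ b' (v'-1) = t₁ b v := by
        simp only [ht₁def]
        rw [if_pos hvc, if_neg (by omega : ¬ v' - 1 < c), show v' - 1 + 1 = v' by ring]
        exact heq
      exact ih t₁ ht₁ h2₁ b v b' (v'-1) hmin₁ heq₁ (by omega) (by omega)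

lemma rot_tiling (ht : IsSL2Tiling t) : IsSL2Tiling (fun i j => t (-i) (-j)) := by
  constructor
  · intro i j; exact ht.1 _ _
  · intro i j
    simp only
    have h := ht.2 (-i-1) (-j-1)
    rw [show -i - 1 + 1 = -i by ring, show -j - 1 + 1 = -j by ring] at h
    rw [show -(i+1) = -i - 1 by ring, show -(j+1) = -j - 1 by ring]
    linarith

lemma transpose_tiling (ht : IsSL2Tiling t) : IsSL2Tiling (fun i j => t j i) := by
  constructor
  · intro i j; exact ht.1 _ _
  · intro i j
    simp only
    have := ht.2 j i
    linarith

/-- Two minima must share a column. -/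
lemma cols (ht : IsSL2Tiling t) (h2 : ∀ i j, 2 ≤ t i j) {b v b' v' : ℤ}
    (hmin : ∀ i j, t b v ≤ t i j) (heq : t b' v' = t b v) : v' = v := by
  rcases lt_trichotomy v v' with h|h|h
  · exact (cols' (v'-v).toNat t ht h2 b v b' v' hmin heq h (by omega)).elim
  · exact h.symm
  · exfalso
    apply cols' (v-v').toNat (fun i j => t (-i) (-j)) (rot_tiling ht)
      (fun i j => h2 _ _) (-b) (-v) (-b') (-v')
    · intro i j; simp only [neg_neg]; exact hmin _ _
    · simp only [neg_neg]; exact heq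
    · omega
    · omega

/-- The minimum is unique. -/
lemma main_unique (ht : IsSL2Tiling t) (h2 : ∀ i j, 2 ≤ t i j) {b v i j : ℤ}
    (hmin : ∀ i' j', t b v ≤ t i' j') (heq : t i j = t b v) : i = b ∧ j = v := by
  have hjv : j = v := cols ht h2 hmin heq
  subst hjv
  have hib : i = b := by
    apply cols (transpose_tiling ht) (fun i j => h2 j i) (b := j) (v := b) (b' := j) (v' := i)
    · intro i' j'; exact hmin j' i'
    · exact heq
  exact ⟨hib, rfl⟩

end SL2Aux

theorem unique_minimum (t : ℤ → ℤ → ℤ) (ht : IsSL2Tiling t)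
    (h2 : ∀ i j : ℤ, 2 ≤ t i j) :
    (∃! bv : ℤ × ℤ, ∀ i j : ℤ, t bv.1 bv.2 ≤ t i j) ∧
    (∃ b v : ℤ, ∀ i j : ℤ, (i, j) ≠ (b, v) → t b v < t i j) := by
  obtain ⟨m, ⟨⟨b, v, hbv⟩, hleast⟩⟩ := Int.exists_least_of_bdd
    (P := fun n => ∃ i j, t i j = n) ⟨1, fun z ⟨i, j, hij⟩ => hij ▸ ht.1 i j⟩ ⟨t 0 0, 0, 0, rfl⟩
  have hmin : ∀ i j, t b v ≤ t i j := fun i j => hbv ▸ hleast (t i j) ⟨i, j, rfl⟩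
  constructor
  · refine ⟨(b, v), hmin, ?_⟩
    rintro ⟨b', v'⟩ hy
    have h1 : t b' v' = t b v := le_antisymm (hy b v) (hmin b' v')
    obtain ⟨hib, hjv⟩ := SL2Aux.main_unique ht h2 hmin h1
    simp [hib, hjv]
  · refine ⟨b, v, fun i j hne => ?_⟩
    rcases lt_or_eq_of_le (hmin i j) with h|h
    · exact h
    · obtain ⟨hib, hjv⟩ := SL2Aux.main_unique ht h2 hmin h.symm
      exact absurd (by rw [hib, hjv]) hne
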